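/- Let H ∈ F_2^{r×n} be such that T(H) is a tree in which every check node has degree at least 2. Then the rows of H are linearly independent over F_2. -/

import Mathlib

open Finset

/-- The Tanner graph of a binary matrix `H`: bit nodes are columns (`Sum.inl`),
check nodes are rows (`Sum.inr`), with an edge whenever the entry is 1. -/
def tanner {r n : ℕ} (H : Matrix (Fin r) (Fin n) (ZMod 2)) :
    SimpleGraph (Fin n ⊕ Fin r) where
  Adj v w :=
    (∃ i j, v = Sum.inl i ∧ w = Sum.inr j ∧ H j i = 1) ∨
    (∃ i j, v = Sum.inr j ∧ w = Sum.inl i ∧ H j i = 1)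
  symm := by
    constructor
    rintro v w (⟨i, j, h1, h2, h3⟩ | ⟨i, j, h1, h2, h3⟩)
    · exact Or.inr ⟨i, j, h2, h1, h3⟩
    · exact Or.inl ⟨i, j, h2, h1, h3⟩
  loopless := by
    constructor
    rintro v (⟨i, j, h1, h2, _⟩ | ⟨i, j, h1, h2, _⟩) <;> subst h1 <;> simp at h2

/-- Membership in the fundamental cone `K(H)` for integer vectors. -/
def inConeZ {r n : ℕ} (H : Matrix (Fin r) (Fin n) (ZMod 2)) (p : Fin n → ℤ) : Prop :=
  (∀ i, 0 ≤ p i) ∧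
  ∀ j i, (if H j i = 1 then p i else 0) ≤
    ∑ l ∈ Finset.univ.erase i, (if H j l = 1 then p l else 0)

/-- `H pᵀ ≡ 0 (mod 2)`. -/
def parityOK {r n : ℕ} (H : Matrix (Fin r) (Fin n) (ZMod 2)) (p : Fin n → ℤ) : Prop :=
  ∀ j, (∑ i, (if H j i = 1 then p i else 0)) % 2 = 0

/-- Graph-cover pseudocodeword, via the Koetter–Li–Vontobel–Walker characterization. -/
def isPseudo {r n : ℕ} (H : Matrix (Fin r) (Fin n) (ZMod 2)) (p : Fin n → ℤ) : Prop :=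
  inConeZ H p ∧ parityOK H p

/-- `p` is a finite nonnegative-integer combination of codewords of `C(H)`. -/
def isComb {r n : ℕ} (H : Matrix (Fin r) (Fin n) (ZMod 2)) (p : Fin n → ℤ) : Prop :=
  ∃ a : (Fin n → ZMod 2) → ℕ,
    ∀ i, p i =
      ∑ c : Fin n → ZMod 2,
        (if H.mulVec c = 0 then (a c : ℤ) * ((c i).val : ℤ) else 0)

/-- `H` is geometrically perfect. -/
def geomPerfect {r n : ℕ} (H : Matrix (Fin r) (Fin n) (ZMod 2)) : Prop :=
  ∀ p, isPseudo H p ↔ isComb H p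



section TreeAux

open SimpleGraph

variable {V : Type*}

lemma walk_parity {G : SimpleGraph V} (f : V → ZMod 2)
    (hf : ∀ {a b}, G.Adj a b → f b = f a + 1) :
    ∀ {u v : V} (p : G.Walk u v), f v = f u + p.length := by
  intro u v p
  induction p with
  | nil => simp
  | @cons u w v h p ih =>
      rw [ih, hf h, SimpleGraph.Walk.length_cons]
      push_cast
      ring

lemma parent_unique [DecidableEq V] {G : SimpleGraph V} (hG : G.IsTree) (v₀ v u₁ u₂ : V)
    (h1 : G.Adj v u₁) (h2 : G.Adj v u₂)
    (d1 : G.dist v₀ u₁ < G.dist v₀ v) (d2 : G.dist v₀ u₂ < G.dist v₀ v) :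
    u₁ = u₂ := by
  have hc := hG.isConnected
  obtain ⟨p₁, hp₁, hl₁⟩ := hc.exists_path_of_dist u₁ v₀
  obtain ⟨p₂, hp₂, hl₂⟩ := hc.exists_path_of_dist u₂ v₀
  have hv1 : v ∉ p₁.support := by
    intro hv
    have : G.dist v v₀ ≤ (p₁.dropUntil v hv).length := SimpleGraph.dist_le _
    have h2' : (p₁.dropUntil v hv).length ≤ p₁.length := SimpleGraph.Walk.length_dropUntil_le _ hv
    have e1 : G.dist v v₀ = G.dist v₀ v := SimpleGraph.dist_comm
    have e2 : G.dist u₁ v₀ = G.dist v₀ u₁ := SimpleGraph.dist_comm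
    omega
  have hv2 : v ∉ p₂.support := by
    intro hv
    have : G.dist v v₀ ≤ (p₂.dropUntil v hv).length := SimpleGraph.dist_le _
    have h2' : (p₂.dropUntil v hv).length ≤ p₂.length := SimpleGraph.Walk.length_dropUntil_le _ hv
    have e1 : G.dist v v₀ = G.dist v₀ v := SimpleGraph.dist_comm
    have e2 : G.dist u₂ v₀ = G.dist v₀ u₂ := SimpleGraph.dist_comm
    omega
  have hq1 : (SimpleGraph.Walk.cons h1 p₁).IsPath := hp₁.cons hv1
  have hq2 : (SimpleGraph.Walk.cons h2 p₂).IsPath := hp₂.cons hv2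
  have := hG.IsAcyclic.path_unique ⟨_, hq1⟩ ⟨_, hq2⟩
  have hs : (SimpleGraph.Walk.cons h1 p₁).support = (SimpleGraph.Walk.cons h2 p₂).support := by
    rw [Subtype.ext_iff] at this
    exact congrArg SimpleGraph.Walk.support this
  rw [SimpleGraph.Walk.support_cons, SimpleGraph.Walk.support_cons,
    p₁.support_eq_cons, p₂.support_eq_cons] at hs
  injection hs with _ hs2; injection hs2

end TreeAux


lemma zmod2_dichot (x : ZMod 2) : x = 0 ∨ x = 1 := by revert x; decide


/-- if `T(H)` is a tree with all check degrees at least 2, the rows of `H`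
are linearly independent over `𝔽₂`. -/
theorem rows_linearIndependent_of_tree {r n : ℕ}
    (H : Matrix (Fin r) (Fin n) (ZMod 2))
    (htree : (tanner H).IsTree)
    (hdeg : ∀ j : Fin r, 2 ≤ (Finset.univ.filter (fun i => H j i = 1)).card) :
    LinearIndependent (ZMod 2) (fun j : Fin r => (H j : Fin n → ZMod 2)) := by
  classical
  rw [Fintype.linearIndependent_iff]
  intro g hg
  by_contra hne
  push_neg at hne
  obtain ⟨j₀, hj₀⟩ := hne
  have hone : ∀ j, g j ≠ 0 → g j = 1 := fun j h => (zmod2_dichot (g j)).resolve_left h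
  set G := tanner H with hG
  -- column parity: for each bit i, the number of selected rows with a 1 at i is even
  set T : Fin n → Finset (Fin r) :=
    fun i => Finset.univ.filter (fun j => g j = 1 ∧ H j i = 1) with hT
  have hpar : ∀ i, 2 ∣ (T i).card := by
    intro i
    have hcol : (∑ j, g j * H j i) = 0 := by
      have := congrFun hg i
      simpa [Finset.sum_apply] using this
    have hterm : ∀ j, g j * H j i = if g j = 1 ∧ H j i = 1 then (1 : ZMod 2) else 0 := by
      intro j
      rcases zmod2_dichot (g j) with h | h <;> rcases zmod2_dichot (H j i) with h' | h' <;>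
        simp [h, h']
    have hcard : ((T i).card : ZMod 2) = 0 := by
      have h1 : (∑ j, g j * H j i) = ∑ j, (if g j = 1 ∧ H j i = 1 then (1 : ZMod 2) else 0) :=
        Finset.sum_congr rfl (fun j _ => hterm j)
      rw [hT, ← Finset.sum_boole, ← h1, hcol]
    exact_mod_cast (ZMod.natCast_eq_zero_iff _ 2).mp hcard
  -- the vertex set W
  set W : Finset (Fin n ⊕ Fin r) :=
    Finset.univ.filter
      (fun v => Sum.elim (fun i => ∃ j, g j = 1 ∧ H j i = 1) (fun j => g j = 1) v) with hW
  have hWr : ∀ j : Fin r, g j = 1 → Sum.inr j ∈ W := by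
    intro j hj; simp [hW, hj]
  have hWl : ∀ i : Fin n, (∃ j, g j = 1 ∧ H j i = 1) → Sum.inl i ∈ W := by
    intro i hi; simp [hW, hi]
  -- every vertex of W has two distinct neighbors in W
  have hkey : ∀ v ∈ W, ∃ u₁ u₂, u₁ ≠ u₂ ∧ u₁ ∈ W ∧ u₂ ∈ W ∧ G.Adj v u₁ ∧ G.Adj v u₂ := by
    intro v hv
    rcases v with i | j
    · have hi : ∃ j, g j = 1 ∧ H j i = 1 := by simpa [hW] using hv
      have hcard1 : 1 ≤ (T i).card := by
        obtain ⟨j, hj1, hj2⟩ := hi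
        exact Finset.card_pos.mpr ⟨j, by simp [hT, hj1, hj2]⟩
      have hcard2 : 1 < (T i).card := by
        have := hpar i; omega
      obtain ⟨j₁, hj₁, j₂, hj₂, hne⟩ := Finset.one_lt_card.mp hcard2
      simp only [hT, Finset.mem_filter] at hj₁ hj₂
      refine ⟨Sum.inr j₁, Sum.inr j₂, by simpa using hne, hWr _ hj₁.2.1, hWr _ hj₂.2.1, ?_, ?_⟩
      · exact Or.inl ⟨i, j₁, rfl, rfl, hj₁.2.2⟩
      · exact Or.inl ⟨i, j₂, rfl, rfl, hj₂.2.2⟩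
    · have hj : g j = 1 := by simpa [hW] using hv
      obtain ⟨i₁, hi₁, i₂, hi₂, hne⟩ := Finset.one_lt_card.mp (lt_of_lt_of_le one_lt_two (hdeg j))
      simp only [Finset.mem_filter] at hi₁ hi₂
      refine ⟨Sum.inl i₁, Sum.inl i₂, by simpa using hne,
        hWl _ ⟨j, hj, hi₁.2⟩, hWl _ ⟨j, hj, hi₂.2⟩, ?_, ?_⟩
      · exact Or.inr ⟨i₁, j, rfl, rfl, hi₁.2⟩
      · exact Or.inr ⟨i₂, j, rfl, rfl, hi₂.2⟩
  -- bipartite parity: adjacent vertices are at different distances from any root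
  set f : (Fin n ⊕ Fin r) → ZMod 2 := Sum.elim (fun _ => 0) (fun _ => 1) with hf
  have hfadj : ∀ {a b}, G.Adj a b → f b = f a + 1 := by
    rintro a b (⟨i, j, rfl, rfl, _⟩ | ⟨i, j, rfl, rfl, _⟩) <;> simp [hf] <;> decide
  set v₀ : Fin n ⊕ Fin r := Sum.inr j₀ with hv₀
  have hc := htree.isConnected
  have hdistne : ∀ {a b}, G.Adj a b → G.dist v₀ a ≠ G.dist v₀ b := by
    intro a b hab heq
    obtain ⟨pa, _, hla⟩ := hc.exists_path_of_dist v₀ a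
    obtain ⟨pb, _, hlb⟩ := hc.exists_path_of_dist v₀ b
    have h1 := walk_parity f (fun {x y} h => hfadj h) pa
    have h2 := walk_parity f (fun {x y} h => hfadj h) pb
    rw [hla] at h1
    rw [hlb] at h2
    rw [← heq] at h2
    have : f a = f b := by rw [h1, h2]
    rw [hfadj hab] at this
    simp [hf] at this
  have hdistle : ∀ {a b}, G.Adj a b → G.dist v₀ b ≤ G.dist v₀ a + 1 := by
    intro a b hab
    obtain ⟨pa, _, hla⟩ := hc.exists_path_of_dist v₀ a
    have := SimpleGraph.dist_le (pa.concat hab)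
    rwa [SimpleGraph.Walk.length_concat, hla] at this
  -- pick a vertex of W at maximal distance from the root
  have hWne : W.Nonempty := ⟨Sum.inr j₀, hWr j₀ (hone j₀ hj₀)⟩
  obtain ⟨v, hvW, hvmax⟩ := Finset.exists_max_image W (fun v => G.dist v₀ v) hWne
  obtain ⟨u₁, u₂, hne, hu₁, hu₂, ha₁, ha₂⟩ := hkey v hvW
  have hd₁ : G.dist v₀ u₁ < G.dist v₀ v :=
    lt_of_le_of_ne (hvmax u₁ hu₁) (hdistne ha₁.symm)
  have hd₂ : G.dist v₀ u₂ < G.dist v₀ v :=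
    lt_of_le_of_ne (hvmax u₂ hu₂) (hdistne ha₂.symm)
  exact hne (parent_unique htree v₀ v u₁ u₂ ha₁ ha₂ hd₁ hd₂)
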